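/- arXiv:math/0501434 — 2 statements merged into one kernel-verified Lean document; each statement's English description precedes it below -/
import Mathlib

section
/- Define f_r(x) for x > 0 and integer r ≥ 0 by f_0(x) = e^{-x} and f_r(x) = ∫_x^∞ f_{r-1}(t)/t dt for r ≥ 1. Then f_r(x) = (1/r!) ∫_x^∞ (log(t/x))^r e^{-t} dt for all x > 0 and r ≥ 1. -/
open MeasureTheory Real Set

lemma intOn_pow_exp (r : ℕ) {a : ℝ} (ha : 0 ≤ a) :
    IntegrableOn (fun s : ℝ => s ^ r * Real.exp (-s)) (Set.Ioi a) := by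
  have h := Real.GammaIntegral_convergent (s := (r + 1 : ℝ)) (by positivity)
  have h2 := h.mono_set (Set.Ioi_subset_Ioi ha)
  refine h2.congr_fun (fun s hs => ?_) measurableSet_Ioi
  rw [add_sub_cancel_right]; beta_reduce; rw [Real.rpow_natCast, mul_comm]

lemma intOn_log_pow_exp (r : ℕ) {x y : ℝ} (hx : 0 < x) (hxy : x ≤ y) :
    IntegrableOn (fun s : ℝ => (Real.log (s / x)) ^ r * Real.exp (-s)) (Set.Ioi y) := by
  have hmaj : IntegrableOn (fun s : ℝ => (1 / x) ^ r * (s ^ r * Real.exp (-s))) (Set.Ioi y) :=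
    (intOn_pow_exp r (lt_of_lt_of_le hx hxy).le).const_mul _
  refine Integrable.mono hmaj ?_ ?_
  · exact (((measurable_id.div_const x).log.pow_const r).mul
      (measurable_id.neg.exp)).aestronglyMeasurable
  · filter_upwards [ae_restrict_mem measurableSet_Ioi] with s hs
    have hs' : y < s := hs
    have hsx : 1 ≤ s / x := (one_le_div hx).2 (hxy.trans hs'.le)
    have hlog0 : 0 ≤ Real.log (s / x) := Real.log_nonneg hsx
    have hlog : Real.log (s / x) ≤ s / x :=
      (Real.log_le_sub_one_of_pos (by linarith)).trans (by linarith)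
    have hs0 : (0:ℝ) ≤ s := by linarith
    rw [Real.norm_eq_abs, Real.norm_eq_abs,
      abs_of_nonneg (mul_nonneg (pow_nonneg hlog0 r) (Real.exp_pos _).le),
      abs_of_nonneg (by positivity)]
    have : Real.log (s / x) ^ r ≤ (s / x) ^ r := pow_le_pow_left₀ hlog0 hlog r
    have hsp : (s / x) ^ r = (1 / x) ^ r * s ^ r := by
      rw [div_eq_mul_one_div, mul_comm s, mul_pow]
    nlinarith [Real.exp_pos (-s), pow_nonneg hlog0 r]

lemma intOn_pow_exp_half (r : ℕ) {a : ℝ} (ha : 0 ≤ a) :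
    IntegrableOn (fun s : ℝ => s ^ r * Real.exp (-(s / 2))) (Set.Ioi a) := by
  have h := (integrableOn_Ioi_comp_mul_left_iff (fun s : ℝ => s ^ r * Real.exp (-s)) a
      (by norm_num : (0 : ℝ) < 1 / 2)).2 (intOn_pow_exp r (by positivity))
  have h2 := h.const_mul ((2 : ℝ) ^ r)
  refine IntegrableOn.congr_fun h2 (fun s _ => ?_) measurableSet_Ioi
  rw [mul_pow]
  rw [show -(1 / 2 * s) = -(s / 2) by ring]
  rw [show (2:ℝ) ^ r * ((1 / 2) ^ r * s ^ r * Real.exp (-(s / 2)))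
    = ((2:ℝ) * (1/2)) ^ r * (s ^ r * Real.exp (-(s / 2))) by rw [mul_pow]; ring]
  norm_num

lemma ftc_log (r : ℕ) {x s : ℝ} (hx : 0 < x) (hxs : x < s) :
    ∫ t in Set.Ioo x s, (Real.log (s / t)) ^ r / t
      = (Real.log (s / x)) ^ (r + 1) / ((r : ℝ) + 1) := by
  have hs : 0 < s := hx.trans hxs
  have hIcc : Set.uIcc x s = Set.Icc x s := Set.uIcc_of_le hxs.le
  have hderiv : ∀ t ∈ Set.uIcc x s,
      HasDerivAt (fun u => -((Real.log s - Real.log u) ^ (r + 1)) / ((r : ℝ) + 1))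
        ((Real.log (s / t)) ^ r / t) t := by
    intro t ht
    rw [hIcc] at ht
    have ht0 : 0 < t := lt_of_lt_of_le hx ht.1
    have h1 : HasDerivAt (fun u : ℝ => Real.log s - Real.log u) (-t⁻¹) t :=
      (Real.hasDerivAt_log ht0.ne').const_sub _
    have h2 := (h1.pow (r + 1)).neg.div_const ((r : ℝ) + 1)
    refine h2.congr_deriv ?_
    rw [Real.log_div hs.ne' ht0.ne']
    push_cast
    field_simp
  have hcont : ContinuousOn (fun t => (Real.log (s / t)) ^ r / t) (Set.uIcc x s) := by
    rw [hIcc]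
    refine ContinuousOn.div (ContinuousOn.pow ?_ r) continuousOn_id
      (fun t ht => (lt_of_lt_of_le hx ht.1).ne')
    refine Real.continuousOn_log.comp (continuousOn_const.div continuousOn_id
      (fun t ht => (lt_of_lt_of_le hx ht.1).ne')) ?_
    intro t ht
    have ht0 : 0 < t := lt_of_lt_of_le hx ht.1
    simp only [Set.mem_compl_iff, Set.mem_singleton_iff]
    positivity
  have hFTC := intervalIntegral.integral_eq_sub_of_hasDerivAt hderiv
    (hcont.intervalIntegrable)
  rw [intervalIntegral.integral_of_le hxs.le, MeasureTheory.integral_Ioc_eq_integral_Ioo] at hFTC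
  rw [hFTC, Real.log_div hs.ne' hx.ne', sub_self, zero_pow (Nat.succ_ne_zero r)]
  ring

lemma swap_key (r : ℕ) {x : ℝ} (hx : 0 < x) :
    ∫ t in Set.Ioi x, (∫ s in Set.Ioi t, (Real.log (s / t)) ^ r * Real.exp (-s)) / t
      = (1 / ((r : ℝ) + 1)) *
        ∫ s in Set.Ioi x, (Real.log (s / x)) ^ (r + 1) * Real.exp (-s) := by
  set F : ℝ → ℝ → ℝ :=
    fun t s => if t < s then (Real.log (s / t)) ^ r * Real.exp (-s) / t else 0 with hFdef
  have hFmeas : Measurable (Function.uncurry F) := by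
    apply Measurable.ite (measurableSet_lt measurable_fst measurable_snd)
    · exact (((measurable_snd.div measurable_fst).log.pow_const r).mul
        measurable_snd.neg.exp).div measurable_fst
    · exact measurable_const
  have hFnonneg : ∀ t s : ℝ, 0 < t → 0 ≤ F t s := by
    intro t s ht
    simp only [hFdef]
    split_ifs with h
    · have : (1:ℝ) ≤ s / t := (one_le_div ht).2 h.le
      have h0 : 0 ≤ Real.log (s / t) := Real.log_nonneg this
      positivity
    · exact le_refl 0
  -- slice description
  have hslice : ∀ t : ℝ, 0 < t →
      F t = Set.indicator (Set.Ioi t)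
        (fun s => (Real.log (s / t)) ^ r * Real.exp (-s) / t) := by
    intro t ht
    ext s
    simp only [hFdef, Set.indicator_apply, Set.mem_Ioi]
  have hsliceInt : ∀ t : ℝ, 0 < t → Integrable (F t) := by
    intro t ht
    rw [hslice t ht]
    rw [integrable_indicator_iff measurableSet_Ioi]
    exact (intOn_log_pow_exp r ht le_rfl).div_const t
  have hsliceVal : ∀ t : ℝ, 0 < t →
      (∫ s, F t s) = (∫ s in Set.Ioi t, (Real.log (s / t)) ^ r * Real.exp (-s)) / t := by
    intro t ht
    rw [hslice t ht, integral_indicator measurableSet_Ioi, integral_div]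
  -- the majorant
  set D : ℝ := ∫ s in Set.Ioi (0:ℝ), (1 / x) ^ r * (s ^ r * Real.exp (-(s / 2))) with hDdef
  have hM : IntegrableOn (fun s : ℝ => (1 / x) ^ r * (s ^ r * Real.exp (-(s / 2))))
      (Set.Ioi (0:ℝ)) := (intOn_pow_exp_half r le_rfl).const_mul _
  have hD0 : 0 ≤ D := setIntegral_nonneg measurableSet_Ioi (by
    intro s hs
    have : (0:ℝ) < s := hs
    positivity)
  have hbound : ∀ t : ℝ, x < t → (∫ s, F t s) ≤ (D / x) * Real.exp (-(t / 2)) := by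
    intro t ht
    have ht0 : 0 < t := hx.trans ht
    rw [hsliceVal t ht0]
    have hA : IntegrableOn (fun s => (Real.log (s / t)) ^ r * Real.exp (-s)) (Set.Ioi t) :=
      intOn_log_pow_exp r ht0 le_rfl
    have hMt : IntegrableOn (fun s : ℝ =>
        ((1 / x) ^ r * (s ^ r * Real.exp (-(s / 2)))) * Real.exp (-(t / 2))) (Set.Ioi t) :=
      (hM.mono_set (Set.Ioi_subset_Ioi ht0.le)).mul_const _
    have h1 : (∫ s in Set.Ioi t, (Real.log (s / t)) ^ r * Real.exp (-s))
        ≤ ∫ s in Set.Ioi t, ((1 / x) ^ r * (s ^ r * Real.exp (-(s / 2)))) * Real.exp (-(t / 2)) := by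
      refine setIntegral_mono_on hA hMt measurableSet_Ioi ?_
      intro s hs
      have hts : t < s := hs
      have hs0 : 0 < s := ht0.trans hts
      have hlog0 : 0 ≤ Real.log (s / t) := Real.log_nonneg ((one_le_div ht0).2 hts.le)
      have hlog1 : Real.log (s / t) ≤ s / t :=
        (Real.log_le_sub_one_of_pos (by positivity)).trans (by linarith)
      have hlog2 : Real.log (s / t) ≤ s / x := hlog1.trans
        (div_le_div_of_nonneg_left hs0.le hx (le_of_lt (lt_of_le_of_lt (le_refl x) ht)))
      have hp : (Real.log (s / t)) ^ r ≤ (s / x) ^ r := pow_le_pow_left₀ hlog0 hlog2 r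
      have hexp : Real.exp (-s) ≤ Real.exp (-(s / 2)) * Real.exp (-(t / 2)) := by
        rw [← Real.exp_add]
        exact Real.exp_le_exp.2 (by linarith)
      calc (Real.log (s / t)) ^ r * Real.exp (-s)
          ≤ (s / x) ^ r * Real.exp (-s) :=
            mul_le_mul_of_nonneg_right hp (Real.exp_pos _).le
        _ ≤ (s / x) ^ r * (Real.exp (-(s / 2)) * Real.exp (-(t / 2))) :=
            mul_le_mul_of_nonneg_left hexp (by positivity)
        _ = ((1 / x) ^ r * (s ^ r * Real.exp (-(s / 2)))) * Real.exp (-(t / 2)) := by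
            rw [div_pow, div_eq_mul_one_div (s ^ r) (x ^ r), ← one_div_pow]
            ring
    have h2 : (∫ s in Set.Ioi t, ((1 / x) ^ r * (s ^ r * Real.exp (-(s / 2)))) * Real.exp (-(t / 2)))
        ≤ D * Real.exp (-(t / 2)) := by
      rw [integral_mul_const]
      refine mul_le_mul_of_nonneg_right ?_ (Real.exp_pos _).le
      refine setIntegral_mono_set hM ?_ ((Set.Ioi_subset_Ioi ht0.le).eventuallyLE)
      filter_upwards [ae_restrict_mem measurableSet_Ioi] with s hs
      have : (0:ℝ) < s := hs
      positivity
    calc (∫ s in Set.Ioi t, (Real.log (s / t)) ^ r * Real.exp (-s)) / t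
        ≤ (D * Real.exp (-(t / 2))) / t := by gcongr; exact h1.trans h2
      _ ≤ (D * Real.exp (-(t / 2))) / x := by
          gcongr
      _ = (D / x) * Real.exp (-(t / 2)) := by ring
  have hprodmeas : AEStronglyMeasurable (Function.uncurry F)
      ((volume.restrict (Set.Ioi x)).prod volume) := hFmeas.aestronglyMeasurable
  have hint : Integrable (Function.uncurry F) ((volume.restrict (Set.Ioi x)).prod volume) := by
    rw [integrable_prod_iff hprodmeas]
    constructor
    · filter_upwards [ae_restrict_mem measurableSet_Ioi] with t ht
      exact hsliceInt t (hx.trans ht)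
    · have hnorm : ∀ t : ℝ, 0 < t → (∫ s, ‖F t s‖) = ∫ s, F t s := by
        intro t ht
        refine integral_congr_ae (Filter.Eventually.of_forall fun s => ?_)
        show ‖F t s‖ = F t s
        rw [Real.norm_eq_abs, abs_of_nonneg (hFnonneg t s ht)]
      refine Integrable.mono' (g := fun t => (D / x) * Real.exp (-(1/2 : ℝ) * t))
        ((exp_neg_integrableOn_Ioi x (by norm_num : (0:ℝ) < 1/2)).const_mul _)
        (hFmeas.norm.aestronglyMeasurable).integral_prod_right' ?_
      filter_upwards [ae_restrict_mem measurableSet_Ioi] with t ht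
      have ht0 : 0 < t := hx.trans ht
      show ‖∫ s, ‖F t s‖‖ ≤ _
      rw [Real.norm_eq_abs, abs_of_nonneg (integral_nonneg fun s => norm_nonneg _),
        hnorm t ht0]
      calc (∫ s, F t s) ≤ D / x * Real.exp (-(t / 2)) := hbound t ht
        _ = D / x * Real.exp (-(1/2 : ℝ) * t) := by ring_nf
  have hswap := integral_integral_swap (μ := volume.restrict (Set.Ioi x)) (ν := volume) hint
  have hL : ∫ t in Set.Ioi x, (∫ s in Set.Ioi t, (Real.log (s / t)) ^ r * Real.exp (-s)) / t
      = ∫ t in Set.Ioi x, ∫ s, F t s := by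
    refine setIntegral_congr_fun measurableSet_Ioi fun t ht => ?_
    rw [hsliceVal t (hx.trans ht)]
  have hR : ∀ s : ℝ, (∫ t in Set.Ioi x, F t s)
      = Set.indicator (Set.Ioi x)
          (fun u => (Real.log (u / x)) ^ (r + 1) / ((r : ℝ) + 1) * Real.exp (-u)) s := by
    intro s
    by_cases hs : x < s
    · rw [Set.indicator_apply, if_pos (Set.mem_Ioi.mpr hs)]
      have hFeq : ∀ t ∈ Set.Ioi x, F t s =
          Set.indicator (Set.Iio s) (fun u => (Real.log (s / u)) ^ r / u * Real.exp (-s)) t := by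
        intro t ht
        simp only [hFdef, Set.indicator_apply, Set.mem_Iio]
        split_ifs with h
        · ring
        · rfl
      rw [setIntegral_congr_fun measurableSet_Ioi hFeq,
        integral_indicator measurableSet_Iio,
        Measure.restrict_restrict measurableSet_Iio, Set.Iio_inter_Ioi,
        integral_mul_const, ftc_log r hx hs]
    · rw [Set.indicator_apply, if_neg (by simpa using hs)]
      push_neg at hs
      have hzero : ∀ t ∈ Set.Ioi x, F t s = 0 := by
        intro t ht
        simp only [hFdef]
        rw [if_neg]
        exact not_lt.2 (hs.trans (le_of_lt ht))
      rw [setIntegral_congr_fun measurableSet_Ioi hzero]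
      simp
  rw [hL, hswap]
  rw [integral_congr_ae (Filter.Eventually.of_forall hR),
    integral_indicator measurableSet_Ioi]
  rw [show (fun u => (Real.log (u / x)) ^ (r + 1) / ((r : ℝ) + 1) * Real.exp (-u))
      = fun u => (1 / ((r : ℝ) + 1)) * ((Real.log (u / x)) ^ (r + 1) * Real.exp (-u))
    from funext fun u => by ring]
  rw [integral_const_mul]

theorem f_r_integral_formula
    (f : ℕ → ℝ → ℝ)
    (h0 : ∀ x : ℝ, 0 < x → f 0 x = Real.exp (-x))
    (hrec : ∀ r : ℕ, ∀ x : ℝ, 0 < x →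
      f (r + 1) x = ∫ t in Set.Ioi x, f r t / t) :
    ∀ r : ℕ, 1 ≤ r → ∀ x : ℝ, 0 < x →
      f r x = (1 / (r.factorial : ℝ)) *
        ∫ t in Set.Ioi x, (Real.log (t / x)) ^ r * Real.exp (-t) := by
  have aux : ∀ r : ℕ, ∀ x : ℝ, 0 < x → f r x = (1 / (r.factorial : ℝ)) *
      ∫ t in Set.Ioi x, (Real.log (t / x)) ^ r * Real.exp (-t) := by
    intro r
    induction r with
    | zero =>
      intro x hx
      rw [h0 x hx]
      simp [integral_exp_neg_Ioi, -integral_comp_neg_Ioi]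
    | succ r ih =>
      intro x hx
      rw [hrec r x hx]
      have hcong : ∀ t ∈ Set.Ioi x, f r t / t =
          ((1 / (r.factorial : ℝ)) *
            ∫ s in Set.Ioi t, (Real.log (s / t)) ^ r * Real.exp (-s)) / t :=
        fun t ht => by rw [ih t (hx.trans ht)]
      rw [setIntegral_congr_fun measurableSet_Ioi hcong]
      simp_rw [mul_div_assoc]
      rw [integral_const_mul, swap_key r hx, ← mul_assoc]
      congr 1
      have h1 : ((r.factorial : ℝ)) ≠ 0 := Nat.cast_ne_zero.2 r.factorial_pos.ne'
      have h2 : ((r : ℝ) + 1) ≠ 0 := by positivity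
      rw [Nat.factorial_succ]
      push_cast
      field_simp
  intro r _ x hx
  exact aux r x hx
end

section
/- Suppose f is holomorphic on the closed disc |z| ≤ R (R > 0) with f(0) ≠ 0, and f has a zero of multiplicity r at a point ρ₀ with 0 < |ρ₀| < R. Then r · log(R/|ρ₀|) + log|f(0)| ≤ max_{|z| = R} log|f(z)|. -/
open Complex

theorem jensen_multiplicity_bound
    (f : ℂ → ℂ) (R : ℝ) (hR : 0 < R) (U : Set ℂ) (hU : IsOpen U)
    (hUball : Metric.closedBall (0 : ℂ) R ⊆ U)
    (hf : DifferentiableOn ℂ f U)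
    (hf0 : f 0 ≠ 0)
    (ρ₀ : ℂ) (hρ₀pos : 0 < ‖ρ₀‖) (hρ₀R : ‖ρ₀‖ < R)
    (r : ℕ) (g : ℂ → ℂ) (hg : AnalyticAt ℂ g ρ₀) (hg0 : g ρ₀ ≠ 0)
    (hfg : ∀ᶠ z in nhds ρ₀, f z = (z - ρ₀) ^ r * g z) :
    ∃ z : ℂ, ‖z‖ = R ∧
      (r : ℝ) * Real.log (R / ‖ρ₀‖) + Real.log (‖f 0‖) ≤
        Real.log (‖f z‖) := by
  set c : ℂ := (starRingEnd ℂ) ρ₀ with hc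
  have hρ₀ne : ρ₀ ≠ 0 := fun h => by simp [h] at hρ₀pos
  have hRne : (R : ℂ) ≠ 0 := by exact_mod_cast hR.ne'
  have hRr : ((R : ℂ)) ^ r ≠ 0 := pow_ne_zero _ hRne
  -- the Blaschke-type denominator is nonvanishing on the closed ball
  have hq : ∀ z ∈ Metric.closedBall (0 : ℂ) R, (R : ℂ) ^ 2 - c * z ≠ 0 := by
    intro z hz
    have hzR : ‖z‖ ≤ R := by
      simpa [Complex.dist_eq] using Metric.mem_closedBall.mp hz
    intro h
    rw [sub_eq_zero] at h
    have habs : ‖(R : ℂ) ^ 2‖ = ‖c * z‖ := by rw [h]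
    rw [norm_pow, Complex.norm_real, Real.norm_eq_abs, _root_.abs_of_pos hR, norm_mul, hc,
      Complex.norm_conj] at habs
    have : ‖ρ₀‖ * ‖z‖ < R ^ 2 := by
      calc ‖ρ₀‖ * ‖z‖ ≤ ‖ρ₀‖ * R :=
            mul_le_mul_of_nonneg_left hzR (norm_nonneg _)
        _ < R * R := by exact mul_lt_mul_of_pos_right hρ₀R hR
        _ = R ^ 2 := (sq R).symm
    linarith
  -- the comparison function
  set h : ℂ → ℂ := fun z =>
    if z = ρ₀ then g ρ₀ * ((R : ℂ) ^ 2 - c * ρ₀) ^ r / (R : ℂ) ^ r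
    else f z * ((R : ℂ) ^ 2 - c * z) ^ r / ((R : ℂ) ^ r * (z - ρ₀) ^ r) with hh
  -- h is differentiable at every point of the closed ball
  have hdiff : ∀ z ∈ Metric.closedBall (0 : ℂ) R, DifferentiableAt ℂ h z := by
    intro z hz
    by_cases hzρ : z = ρ₀
    · subst hzρ
      have hev : h =ᶠ[nhds z]
          fun w => g w * ((R : ℂ) ^ 2 - c * w) ^ r / (R : ℂ) ^ r := by
        filter_upwards [hfg] with w hw
        by_cases hwz : w = z
        · subst hwz; simp [hh]
        · have hwne : (w - z) ^ r ≠ 0 := pow_ne_zero _ (sub_ne_zero.mpr hwz)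
          simp only [hh, if_neg hwz, hw]
          field_simp
      have : DifferentiableAt ℂ
          (fun w => g w * ((R : ℂ) ^ 2 - c * w) ^ r / (R : ℂ) ^ r) z := by
        apply DifferentiableAt.div_const
        exact hg.differentiableAt.mul
          (((differentiableAt_const _).sub
            ((differentiableAt_const _).mul differentiableAt_id)).pow r)
      exact this.congr_of_eventuallyEq hev
    · have hev : h =ᶠ[nhds z]
          fun w => f w * ((R : ℂ) ^ 2 - c * w) ^ r / ((R : ℂ) ^ r * (w - ρ₀) ^ r) := by
        filter_upwards [isOpen_ne.mem_nhds hzρ] with w hw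
        simp only [hh, if_neg hw]
      have hfz : DifferentiableAt ℂ f z :=
        hf.differentiableAt (hU.mem_nhds (hUball hz))
      have : DifferentiableAt ℂ
          (fun w => f w * ((R : ℂ) ^ 2 - c * w) ^ r / ((R : ℂ) ^ r * (w - ρ₀) ^ r)) z := by
        apply DifferentiableAt.div
        · exact hfz.mul (((differentiableAt_const _).sub
            ((differentiableAt_const _).mul differentiableAt_id)).pow r)
        · exact (differentiableAt_const _).mul ((differentiableAt_id.sub
            (differentiableAt_const _)).pow r)
        · exact mul_ne_zero hRr (pow_ne_zero _ (sub_ne_zero.mpr hzρ))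
      exact this.congr_of_eventuallyEq hev
  -- |h| = |f| on the sphere
  have hsphere : ∀ z, ‖z‖ = R → ‖h z‖ = ‖f z‖ := by
    intro z hzR
    have hzρ : z ≠ ρ₀ := fun e => by rw [← e, hzR] at hρ₀R; exact lt_irrefl _ hρ₀R
    have key : (R : ℂ) ^ 2 - c * z = z * (starRingEnd ℂ) (z - ρ₀) := by
      have : z * (starRingEnd ℂ) z = ((R : ℂ)) ^ 2 := by
        rw [Complex.mul_conj, Complex.normSq_eq_norm_sq, hzR]
        push_cast
        ring
      rw [map_sub, mul_sub, this, hc]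
      ring
    have habs : ‖(R : ℂ) ^ 2 - c * z‖ = R * ‖z - ρ₀‖ := by
      rw [key, norm_mul, Complex.norm_conj, hzR]
    have hzρne : ‖z - ρ₀‖ ≠ 0 := by
      simpa [sub_eq_zero] using hzρ
    simp only [hh, if_neg hzρ, norm_div, norm_mul, norm_pow, habs, Complex.norm_real,
      Real.norm_eq_abs, _root_.abs_of_pos hR, mul_pow]
    field_simp
  -- maximum of |f| on the sphere
  obtain ⟨z₀, hz₀mem, hz₀max⟩ :=
    (isCompact_sphere (0 : ℂ) R).exists_isMaxOn
      (NormedSpace.sphere_nonempty.mpr hR.le)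
      (continuous_norm.comp_continuousOn (hf.continuousOn.mono
        (Metric.sphere_subset_closedBall.trans hUball)))
  have hz₀R : ‖z₀‖ = R := by
    simpa [Complex.dist_eq] using hz₀mem
  refine ⟨z₀, hz₀R, ?_⟩
  -- maximum modulus principle for h
  have hclosure : closure (Metric.ball (0 : ℂ) R) = Metric.closedBall (0 : ℂ) R :=
    closure_ball 0 hR.ne'
  have hhd : DiffContOnCl ℂ h (Metric.ball (0 : ℂ) R) := by
    apply DifferentiableOn.diffContOnCl
    rw [hclosure]
    exact fun z hz => (hdiff z hz).differentiableWithinAt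
  have hmax : ‖h 0‖ ≤ ‖f z₀‖ := by
    apply Complex.norm_le_of_forall_mem_frontier_norm_le
      Metric.isBounded_ball hhd
    · intro z hz
      rw [frontier_ball 0 hR.ne'] at hz
      have hzR : ‖z‖ = R := by simpa [Complex.dist_eq] using hz
      rw [hsphere z hzR]
      exact hz₀max hz
    · rw [hclosure]
      simpa using hR.le
  -- compute |h 0|
  have h0 : ‖h 0‖ = ‖f 0‖ * (R / ‖ρ₀‖) ^ r := by
    have h0ρ : (0 : ℂ) ≠ ρ₀ := fun e => hρ₀ne e.symm
    simp only [hh, if_neg h0ρ, norm_div, norm_mul, norm_pow, mul_zero, sub_zero,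
      zero_sub, norm_neg, Complex.norm_real, Real.norm_eq_abs, _root_.abs_of_pos hR]
    rw [div_pow]
    have : R ^ 2 = R * R := sq R
    field_simp
    ring
  rw [h0] at hmax
  -- conclude via logarithms
  have hf0abs : 0 < ‖f 0‖ := norm_pos_iff.mpr hf0
  have hratio : (0 : ℝ) < R / ‖ρ₀‖ := div_pos hR hρ₀pos
  have hlog := Real.log_le_log (by positivity) hmax
  rw [Real.log_mul hf0abs.ne' (by positivity), Real.log_pow] at hlog
  linarith
end
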